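/- The function rank_D defined on subsets S of [n] by rank_D(S) = min over families of pairwise disjoint nonempty subsets T_1,...,T_ℓ of S of [ Σ_i (rank_{M_1}(T_i) + rank_{M_2}(T_i) − 1) + |S \ (T_1 ∪ ... ∪ T_ℓ)| ] is the rank function of a matroid on [n]. -/

import Mathlib

open Finset

/-- A matroid on the ground set `Fin n`, presented by its rank function. -/
structure FinMatroid (n : ℕ) where
  rank : Finset (Fin n) → ℕ
  rank_empty : rank ∅ = 0
  rank_le_card : ∀ S : Finset (Fin n), rank S ≤ S.card
  rank_mono : ∀ ⦃S T : Finset (Fin n)⦄, S ⊆ T → rank S ≤ rank T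
  rank_submod : ∀ S T : Finset (Fin n),
    rank (S ∪ T) + rank (S ∩ T) ≤ rank S + rank T

namespace FinMatroid

variable {n : ℕ}

/-- A set is independent if its rank equals its cardinality. -/
def Indep (M : FinMatroid n) (I : Finset (Fin n)) : Prop := M.rank I = I.card

/-- The rank of the matroid (rank of the full ground set). -/
def rk (M : FinMatroid n) : ℕ := M.rank Finset.univ

/-- A matroid is loopless if every singleton has positive rank. -/
def Loopless (M : FinMatroid n) : Prop := ∀ i : Fin n, 0 < M.rank {i}

/-- Two matroids on `[n]` have no common loops. -/
def NoCommonLoops (M₁ M₂ : FinMatroid n) : Prop :=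
  ∀ i : Fin n, 0 < M₁.rank {i} ∨ 0 < M₂.rank {i}

/-- A valid family for the Dilworth minimum: pairwise disjoint nonempty
subsets of `S`. -/
def ValidFamily (S : Finset (Fin n)) (𝒯 : Finset (Finset (Fin n))) : Prop :=
  (∀ T ∈ 𝒯, T ⊆ S ∧ T.Nonempty) ∧
    ∀ T ∈ 𝒯, ∀ T' ∈ 𝒯, T ≠ T' → Disjoint T T'

/-- The value `Σ_i (rank_{M₁}(T_i) + rank_{M₂}(T_i) − 1) + |S \ ∪ T_i|`
associated to a family. -/
def famValue (M₁ M₂ : FinMatroid n) (S : Finset (Fin n))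
    (𝒯 : Finset (Finset (Fin n))) : ℕ :=
  (∑ T ∈ 𝒯, (M₁.rank T + M₂.rank T - 1)) + (S \ 𝒯.sup id).card

/-- The rank function of the diagonal Dilworth truncation `D(M₁,M₂)`. -/
noncomputable def rankD (M₁ M₂ : FinMatroid n) (S : Finset (Fin n)) : ℕ :=
  sInf {v : ℕ | ∃ 𝒯 : Finset (Finset (Fin n)),
    ValidFamily S 𝒯 ∧ v = famValue M₁ M₂ S 𝒯}

/-- Independence in the diagonal Dilworth truncation. -/
def IndepD (M₁ M₂ : FinMatroid n) (I : Finset (Fin n)) : Prop :=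
  rankD M₁ M₂ I = I.card

/-- Circuits of the diagonal Dilworth truncation: minimal dependent sets. -/
def CircuitD (M₁ M₂ : FinMatroid n) (C : Finset (Fin n)) : Prop :=
  ¬ IndepD M₁ M₂ C ∧ ∀ C' : Finset (Fin n), C' ⊂ C → IndepD M₁ M₂ C'

end FinMatroid

namespace DilworthAux

open FinMatroid

variable {n : ℕ} (M₁ M₂ : FinMatroid n)

/-- The sum of the two rank functions. -/
def r (A : Finset (Fin n)) : ℕ := M₁.rank A + M₂.rank A

/-- Independence for the Dilworth truncation, phrased without subtraction. -/
def IndepI (I : Finset (Fin n)) : Prop :=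
  ∀ A ⊆ I, A.Nonempty → A.card + 1 ≤ r M₁ M₂ A

lemma r_mono {A B : Finset (Fin n)} (hAB : A ⊆ B) : r M₁ M₂ A ≤ r M₁ M₂ B :=
  Nat.add_le_add (M₁.rank_mono hAB) (M₂.rank_mono hAB)

lemma r_submod (A B : Finset (Fin n)) :
    r M₁ M₂ (A ∪ B) + r M₁ M₂ (A ∩ B) ≤ r M₁ M₂ A + r M₁ M₂ B := by
  have h1 := M₁.rank_submod A B
  have h2 := M₂.rank_submod A B
  unfold r; omega

lemma r_pos (h : NoCommonLoops M₁ M₂) {A : Finset (Fin n)} (hA : A.Nonempty) :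
    1 ≤ r M₁ M₂ A := by
  obtain ⟨i, hi⟩ := hA
  have hs : ({i} : Finset (Fin n)) ⊆ A := Finset.singleton_subset_iff.mpr hi
  have h1 : M₁.rank {i} ≤ M₁.rank A := M₁.rank_mono hs
  have h2 : M₂.rank {i} ≤ M₂.rank A := M₂.rank_mono hs
  rcases h i with h' | h' <;> unfold r <;> omega

lemma indepI_empty : IndepI M₁ M₂ (∅ : Finset (Fin n)) := by
  intro A hA hne
  exact absurd (Finset.subset_empty.mp hA) hne.ne_empty

lemma indepI_subset {I J : Finset (Fin n)} (hI : IndepI M₁ M₂ I) (hJI : J ⊆ I) :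
    IndepI M₁ M₂ J := fun A hA => hI A (hA.trans hJI)

/-- For an independent set `I` and any nonempty `X`, `|I ∩ X| + 1 ≤ r X`. -/
lemma indep_bound (h : NoCommonLoops M₁ M₂) {I : Finset (Fin n)}
    (hI : IndepI M₁ M₂ I) {X : Finset (Fin n)} (hX : X.Nonempty) :
    (I ∩ X).card + 1 ≤ r M₁ M₂ X := by
  by_cases hne : (I ∩ X).Nonempty
  · exact le_trans (hI _ Finset.inter_subset_left hne)
      (r_mono M₁ M₂ Finset.inter_subset_right)
  · rw [Finset.not_nonempty_iff_eq_empty] at hne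
    rw [hne]
    simpa using r_pos M₁ M₂ h hX

/-- The lower bound: any independent subset of `S` has cardinality at most
the value of any valid family for `S`. -/
lemma card_le_famValue (h : NoCommonLoops M₁ M₂) {I S : Finset (Fin n)}
    {𝒯 : Finset (Finset (Fin n))} (hI : IndepI M₁ M₂ I) (hIS : I ⊆ S)
    (h𝒯 : ValidFamily S 𝒯) : I.card ≤ famValue M₁ M₂ S 𝒯 := by
  classical
  set U := 𝒯.sup id with hU
  have hIcard : (I ∩ U).card + (I \ U).card = I.card :=
    Finset.card_inter_add_card_sdiff I U
  have h1 : (I \ U).card ≤ (S \ U).card :=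
    Finset.card_le_card (Finset.sdiff_subset_sdiff hIS (le_refl U))
  have h2 : (I ∩ U).card ≤ ∑ T ∈ 𝒯, (I ∩ T).card := by
    have heq : I ∩ U = 𝒯.biUnion (fun T => I ∩ T) := by
      ext x
      simp only [Finset.mem_inter, Finset.mem_biUnion, hU, Finset.mem_sup, id]
      tauto
    rw [heq]
    exact Finset.card_biUnion_le
  have h3 : ∀ T ∈ 𝒯, (I ∩ T).card ≤ M₁.rank T + M₂.rank T - 1 := by
    intro T hT
    have hTne := (h𝒯.1 T hT).2
    have hb := indep_bound M₁ M₂ h hI hTne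
    unfold r at hb; omega
  have h4 : ∑ T ∈ 𝒯, (I ∩ T).card ≤ ∑ T ∈ 𝒯, (M₁.rank T + M₂.rank T - 1) :=
    Finset.sum_le_sum h3
  unfold famValue
  rw [← hU]
  omega

/-- Existence of maximal supersets satisfying a predicate, inside `S`. -/
lemma exists_maximal_superset {P : Finset (Fin n) → Prop} {A S : Finset (Fin n)}
    (hAS : A ⊆ S) (hA : P A) :
    ∃ B, A ⊆ B ∧ B ⊆ S ∧ P B ∧ ∀ C, P C → C ⊆ S → B ⊆ C → B = C := by
  classical
  have hfin : ({B : Finset (Fin n) | A ⊆ B ∧ B ⊆ S ∧ P B}).Finite := by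
    apply Set.Finite.subset (S.powerset : Finset (Finset (Fin n))).finite_toSet
    intro B hB
    simpa using hB.2.1
  obtain ⟨B, hB, hmax⟩ := Set.Finite.exists_maximalFor id _ hfin ⟨A, le_refl A, hAS, hA⟩
  exact ⟨B, hB.1, hB.2.1, hB.2.2, fun C hC hCS hBC =>
    le_antisymm hBC (hmax ⟨hB.1.trans hBC, hCS, hC⟩ hBC)⟩

section Construction

variable {S I : Finset (Fin n)}

/-- Tight sets with respect to a maximal independent set. -/
def Tight (S I A : Finset (Fin n)) : Prop :=
  A ⊆ S ∧ A.Nonempty ∧ r M₁ M₂ A = (I ∩ A).card + 1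

lemma tight_union (h : NoCommonLoops M₁ M₂) (hI : IndepI M₁ M₂ I) {A B : Finset (Fin n)}
    (hA : Tight M₁ M₂ S I A) (hB : Tight M₁ M₂ S I B)
    (hAB : (A ∩ B).Nonempty) : Tight M₁ M₂ S I (A ∪ B) := by
  obtain ⟨hAS, hAne, hAt⟩ := hA
  obtain ⟨hBS, hBne, hBt⟩ := hB
  have hUne : (A ∪ B).Nonempty := hAne.mono Finset.subset_union_left
  have hu : (I ∩ (A ∪ B)).card + 1 ≤ r M₁ M₂ (A ∪ B) :=
    indep_bound M₁ M₂ h hI hUne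
  have hi : (I ∩ (A ∩ B)).card + 1 ≤ r M₁ M₂ (A ∩ B) :=
    indep_bound M₁ M₂ h hI hAB
  have hsub := r_submod M₁ M₂ A B
  have hcards : (I ∩ (A ∪ B)).card + (I ∩ (A ∩ B)).card
      = (I ∩ A).card + (I ∩ B).card := by
    have h1 : (I ∩ A) ∪ (I ∩ B) = I ∩ (A ∪ B) := (Finset.inter_union_distrib_left I A B).symm
    have h2 : (I ∩ A) ∩ (I ∩ B) = I ∩ (A ∩ B) := by
      ext x; simp only [Finset.mem_inter]; tauto
    have := Finset.card_union_add_card_inter (I ∩ A) (I ∩ B)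
    rw [h1, h2] at this
    omega
  exact ⟨Finset.union_subset hAS hBS, hUne, by omega⟩

/-- Every element of `S \ I` lies in some tight set, when `I` is a maximal
independent subset of `S`. -/
lemma exists_tight_mem (h : NoCommonLoops M₁ M₂) (hIS : I ⊆ S) (hI : IndepI M₁ M₂ I)
    (hmax : ∀ J, IndepI M₁ M₂ J → J ⊆ S → I ⊆ J → I = J)
    {x : Fin n} (hxS : x ∈ S) (hxI : x ∉ I) :
    ∃ A, Tight M₁ M₂ S I A ∧ x ∈ A := by
  classical
  have hdep : ¬ IndepI M₁ M₂ (insert x I) := by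
    intro hind
    have := hmax (insert x I) hind
      (Finset.insert_subset hxS hIS) (Finset.subset_insert x I)
    exact hxI (this ▸ Finset.mem_insert_self x I)
  unfold IndepI at hdep
  push_neg at hdep
  obtain ⟨A, hAsub, hAne, hrA⟩ := hdep
  have hxA : x ∈ A := by
    by_contra hxA
    have hAI : A ⊆ I := fun y hy => by
      rcases Finset.mem_insert.mp (hAsub hy) with rfl | hy'
      · exact absurd hy hxA
      · exact hy'
    exact absurd (hI A hAI hAne) (by omega)
  have hIA : I ∩ A = A.erase x := by
    ext y
    simp only [Finset.mem_inter, Finset.mem_erase]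
    constructor
    · rintro ⟨hyI, hyA⟩
      exact ⟨fun he => hxI (he ▸ hyI), hyA⟩
    · rintro ⟨hyx, hyA⟩
      rcases Finset.mem_insert.mp (hAsub hyA) with rfl | hyI
      · exact absurd rfl hyx
      · exact ⟨hyI, hyA⟩
  have hcard : (I ∩ A).card + 1 = A.card := by
    rw [hIA]
    exact Finset.card_erase_add_one hxA
  have hb : (I ∩ A).card + 1 ≤ r M₁ M₂ A := indep_bound M₁ M₂ h hI hAne
  have hAS : A ⊆ S := hAsub.trans (Finset.insert_subset hxS hIS)
  exact ⟨A, ⟨hAS, hAne, by omega⟩, hxA⟩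

/-- The key construction: a maximal independent subset of `S` yields a valid
family whose value equals its cardinality. -/
lemma exists_family_of_maximal (h : NoCommonLoops M₁ M₂) (hIS : I ⊆ S) (hI : IndepI M₁ M₂ I)
    (hmax : ∀ J, IndepI M₁ M₂ J → J ⊆ S → I ⊆ J → I = J) :
    ∃ 𝒯 : Finset (Finset (Fin n)),
      ValidFamily S 𝒯 ∧ famValue M₁ M₂ S 𝒯 = I.card := by
  classical
  set 𝒯 : Finset (Finset (Fin n)) :=
    S.powerset.filter (fun A => Tight M₁ M₂ S I A ∧
      ∀ B, Tight M₁ M₂ S I B → A ⊆ B → A = B) with h𝒯def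
  have mem_𝒯 : ∀ {A}, A ∈ 𝒯 ↔ (Tight M₁ M₂ S I A ∧
      ∀ B, Tight M₁ M₂ S I B → A ⊆ B → A = B) := by
    intro A
    simp only [h𝒯def, Finset.mem_filter, Finset.mem_powerset]
    exact ⟨fun hh => hh.2, fun hh => ⟨hh.1.1, hh⟩⟩
  have hdisj : ∀ A ∈ 𝒯, ∀ B ∈ 𝒯, A ≠ B → Disjoint A B := by
    intro A hA B hB hne
    by_contra hnd
    obtain ⟨hAt, hAm⟩ := mem_𝒯.mp hA
    obtain ⟨hBt, hBm⟩ := mem_𝒯.mp hB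
    have hint : (A ∩ B).Nonempty :=
      Finset.not_disjoint_iff_nonempty_inter.mp hnd
    have hUt := tight_union M₁ M₂ h hI hAt hBt hint
    have h1 : A = A ∪ B := hAm _ hUt Finset.subset_union_left
    have h2 : B = A ∪ B := hBm _ hUt Finset.subset_union_right
    exact hne (h1.trans h2.symm)
  have hvalid : ValidFamily S 𝒯 :=
    ⟨fun T hT => ⟨(mem_𝒯.mp hT).1.1, (mem_𝒯.mp hT).1.2.1⟩, hdisj⟩
  set U := 𝒯.sup id with hU
  have hcover : ∀ x ∈ S, x ∉ I → x ∈ U := by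
    intro x hxS hxI
    obtain ⟨A, hAt, hxA⟩ := exists_tight_mem M₁ M₂ h hIS hI hmax hxS hxI
    obtain ⟨B, hAB, hBS, hBt, hBmax⟩ :=
      exists_maximal_superset (P := Tight M₁ M₂ S I) hAt.1 hAt
    have hB𝒯 : B ∈ 𝒯 := mem_𝒯.mpr ⟨hBt, fun C hC hBC => hBmax C hC hC.1 hBC⟩
    rw [hU, Finset.mem_sup]
    exact ⟨B, hB𝒯, hAB hxA⟩
  have hSU : S \ U = I \ U := by
    ext x
    simp only [Finset.mem_sdiff]
    constructor
    · rintro ⟨hxS, hxU⟩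
      refine ⟨?_, hxU⟩
      by_contra hxI
      exact hxU (hcover x hxS hxI)
    · rintro ⟨hxI, hxU⟩
      exact ⟨hIS hxI, hxU⟩
  have hsum : ∑ T ∈ 𝒯, (M₁.rank T + M₂.rank T - 1) = ∑ T ∈ 𝒯, (I ∩ T).card := by
    apply Finset.sum_congr rfl
    intro T hT
    have hTt := (mem_𝒯.mp hT).1.2.2
    unfold r at hTt
    omega
  have hbu : ∑ T ∈ 𝒯, (I ∩ T).card = (I ∩ U).card := by
    have heq : I ∩ U = 𝒯.biUnion (fun T => I ∩ T) := by
      ext x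
      simp only [Finset.mem_inter, Finset.mem_biUnion, hU, Finset.mem_sup, id]
      tauto
    rw [heq, Finset.card_biUnion]
    intro A hA B hB hne
    exact Finset.disjoint_of_subset_left Finset.inter_subset_right
      (Finset.disjoint_of_subset_right Finset.inter_subset_right
        (hdisj A hA B hB hne))
  have hIcard : (I ∩ U).card + (I \ U).card = I.card :=
    Finset.card_inter_add_card_sdiff I U
  refine ⟨𝒯, hvalid, ?_⟩
  unfold famValue
  rw [← hU, hsum, hbu, hSU]
  omega

end Construction

/-- Existence of maximal independent supersets. -/
lemma exists_maximal_indep (I S : Finset (Fin n)) (hIS : I ⊆ S)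
    (hI : IndepI M₁ M₂ I) :
    ∃ J, I ⊆ J ∧ J ⊆ S ∧ IndepI M₁ M₂ J ∧
      ∀ K, IndepI M₁ M₂ K → K ⊆ S → J ⊆ K → J = K := by
  obtain ⟨B, h1, h2, h3, h4⟩ :=
    exists_maximal_superset (P := IndepI M₁ M₂) hIS hI
  exact ⟨B, h1, h2, h3, h4⟩

lemma famValue_set_nonempty (S : Finset (Fin n)) :
    {v : ℕ | ∃ 𝒯 : Finset (Finset (Fin n)),
      ValidFamily S 𝒯 ∧ v = famValue M₁ M₂ S 𝒯}.Nonempty := by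
  refine ⟨famValue M₁ M₂ S ∅, ∅, ?_, rfl⟩
  exact ⟨fun T hT => absurd hT (Finset.notMem_empty T),
    fun T hT => absurd hT (Finset.notMem_empty T)⟩

/-- Any independent subset of `S` has size at most `rankD S`. -/
lemma card_le_rankD (h : NoCommonLoops M₁ M₂) {I S : Finset (Fin n)}
    (hI : IndepI M₁ M₂ I) (hIS : I ⊆ S) : I.card ≤ rankD M₁ M₂ S := by
  have hmem := Nat.sInf_mem (famValue_set_nonempty M₁ M₂ S)
  obtain ⟨𝒯, h𝒯, heq⟩ := hmem
  rw [rankD, heq]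
  exact card_le_famValue M₁ M₂ h hI hIS h𝒯

/-- The min-max theorem: `rankD S` equals the size of any maximal
independent subset of `S`. -/
lemma rankD_eq_of_maximal (h : NoCommonLoops M₁ M₂) {I S : Finset (Fin n)}
    (hIS : I ⊆ S) (hI : IndepI M₁ M₂ I)
    (hmax : ∀ J, IndepI M₁ M₂ J → J ⊆ S → I ⊆ J → I = J) :
    rankD M₁ M₂ S = I.card := by
  obtain ⟨𝒯, hvalid, hval⟩ := exists_family_of_maximal M₁ M₂ h hIS hI hmax
  have hle : rankD M₁ M₂ S ≤ I.card := by
    rw [← hval]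
    exact Nat.sInf_le ⟨𝒯, hvalid, rfl⟩
  exact le_antisymm hle (card_le_rankD M₁ M₂ h hI hIS)

end DilworthAux

open FinMatroid in
/-- The function `rank_D` is the rank function of a matroid on `[n]`. -/
theorem rankD_is_matroid_rank (n : ℕ) (M₁ M₂ : FinMatroid n)
    (h : NoCommonLoops M₁ M₂) :
    ∃ D : FinMatroid n, D.rank = rankD M₁ M₂ := by
  classical
  open DilworthAux in
  refine ⟨⟨rankD M₁ M₂, ?_, ?_, ?_, ?_⟩, rfl⟩
  · -- rank_empty
    have hle : rankD M₁ M₂ ∅ ≤ famValue M₁ M₂ ∅ ∅ := by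
      apply Nat.sInf_le
      exact ⟨∅, ⟨fun T hT => absurd hT (Finset.notMem_empty T),
        fun T hT => absurd hT (Finset.notMem_empty T)⟩, rfl⟩
    have : famValue M₁ M₂ ∅ ∅ = 0 := by simp [famValue]
    omega
  · -- rank_le_card
    intro S
    have hle : rankD M₁ M₂ S ≤ famValue M₁ M₂ S ∅ := by
      apply Nat.sInf_le
      exact ⟨∅, ⟨fun T hT => absurd hT (Finset.notMem_empty T),
        fun T hT => absurd hT (Finset.notMem_empty T)⟩, rfl⟩
    have : famValue M₁ M₂ S ∅ = S.card := by simp [famValue]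
    omega
  · -- rank_mono
    intro S T hST
    obtain ⟨I, -, hIS, hIind, hImax⟩ :=
      exists_maximal_indep M₁ M₂ ∅ S (Finset.empty_subset S) (indepI_empty M₁ M₂)
    obtain ⟨J, hIJ, hJT, hJind, hJmax⟩ :=
      exists_maximal_indep M₁ M₂ I T (hIS.trans hST) hIind
    rw [rankD_eq_of_maximal M₁ M₂ h hIS hIind hImax,
      rankD_eq_of_maximal M₁ M₂ h hJT hJind hJmax]
    exact Finset.card_le_card hIJ
  · -- rank_submod
    intro S T
    obtain ⟨I, -, hIST, hIind, hImax⟩ :=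
      exists_maximal_indep M₁ M₂ ∅ (S ∩ T) (Finset.empty_subset _) (indepI_empty M₁ M₂)
    obtain ⟨J, hIJ, hJU, hJind, hJmax⟩ :=
      exists_maximal_indep M₁ M₂ I (S ∪ T)
        (hIST.trans (Finset.inter_subset_union)) hIind
    have hJmax' : ∀ K, IndepI M₁ M₂ K → K ⊆ S ∪ T → J ⊆ K → J = K := hJmax
    have hrU : rankD M₁ M₂ (S ∪ T) = J.card :=
      rankD_eq_of_maximal M₁ M₂ h hJU hJind hJmax'
    have hrI : rankD M₁ M₂ (S ∩ T) = I.card :=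
      rankD_eq_of_maximal M₁ M₂ h hIST hIind hImax
    -- J ∩ (S ∩ T) = I
    have hJST : J ∩ (S ∩ T) = I := by
      have hsub : I ⊆ J ∩ (S ∩ T) := Finset.subset_inter hIJ hIST
      have hind : IndepI M₁ M₂ (J ∩ (S ∩ T)) :=
        indepI_subset M₁ M₂ hJind Finset.inter_subset_left
      exact (hImax _ hind Finset.inter_subset_right hsub).symm
    have h1 : (J ∩ S).card ≤ rankD M₁ M₂ S :=
      card_le_rankD M₁ M₂ h
        (indepI_subset M₁ M₂ hJind Finset.inter_subset_left)
        Finset.inter_subset_right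
    have h2 : (J ∩ T).card ≤ rankD M₁ M₂ T :=
      card_le_rankD M₁ M₂ h
        (indepI_subset M₁ M₂ hJind Finset.inter_subset_left)
        Finset.inter_subset_right
    have hcard : (J ∩ S).card + (J ∩ T).card = J.card + I.card := by
      have hu : (J ∩ S) ∪ (J ∩ T) = J := by
        rw [← Finset.inter_union_distrib_left]
        exact Finset.inter_eq_left.mpr hJU
      have hi : (J ∩ S) ∩ (J ∩ T) = I := by
        rw [show (J ∩ S) ∩ (J ∩ T) = J ∩ (S ∩ T) by
          ext x; simp only [Finset.mem_inter]; tauto]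
        exact hJST
      have := Finset.card_union_add_card_inter (J ∩ S) (J ∩ T)
      rw [hu, hi] at this
      omega
    omega
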